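/- Let s be a positive integer and let G be a K_4-free graph on at least R(4, R(4, s)) + 1 vertices such that for every vertex there is an associated 'private' vertex system as follows: G has a vertex set X = {x_1, …, x_K} with K > R(4, R(4, s)) and vertices y_1, …, y_K such that each y_j has neighbor set inside X exactly {x_j}. Then there exist an independent subset X'' ⊆ X of size s and an independent set Y'' among the corresponding vertices y_j such that each y_j ∈ Y'' has exactly one neighbor in X'', namely its associated x_j. -/

import Mathlib

open SimpleGraph

/-- The Ramsey number `R(k, l)`: the least `N` such that every finite simple graph with at
least `N` vertices contains a clique with `k` vertices or an independent set with `l`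
vertices (an independent set of size `l` is a clique of size `l` in the complement). -/
noncomputable def ramseyNumber (k l : ℕ) : ℕ :=
  sInf {N | ∀ (V : Type) [Fintype V] (G : SimpleGraph V),
    N ≤ Fintype.card V →
      (∃ S : Finset V, G.IsNClique k S) ∨ (∃ S : Finset V, Gᶜ.IsNClique l S)}

/-- The one-subdivision of `K_{1,s}`: a center `Sum.inl ()`, middle vertices
`Sum.inr (Sum.inl i)` and leaves `Sum.inr (Sum.inr i)`; the center is adjacent to every
middle vertex, and the `i`-th middle vertex is adjacent to the `i`-th leaf. -/
def SDK (s : ℕ) : SimpleGraph (Unit ⊕ Fin s ⊕ Fin s) :=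
  SimpleGraph.fromRel (fun a b =>
    (∃ i : Fin s, a = Sum.inl () ∧ b = Sum.inr (Sum.inl i)) ∨
    (∃ i : Fin s, a = Sum.inr (Sum.inl i) ∧ b = Sum.inr (Sum.inr i)))

/-- `G` is `H`-free: no induced subgraph of `G` is isomorphic to `H`. -/
def IsFree {W V : Type*} (H : SimpleGraph W) (G : SimpleGraph V) : Prop :=
  ¬ Nonempty (H ↪g G)

/-- `nbhd G S` is the set of all vertices having a neighbour in `S`. -/
def nbhd {V : Type*} (G : SimpleGraph V) (S : Set V) : Set V :=
  {v | ∃ s ∈ S, G.Adj s v}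

/-- Recursive Ramsey bound. -/
def Rb : ℕ → ℕ → ℕ
  | 0, _ => 0
  | _ + 1, 0 => 0
  | k + 1, l + 1 => Rb k (l + 1) + Rb (k + 1) l + 1

theorem ramsey_finset : ∀ (n k l : ℕ), k + l ≤ n →
    ∀ {V : Type} [Fintype V] (G : SimpleGraph V) (A : Finset V), Rb k l ≤ A.card →
      (∃ S ⊆ A, G.IsNClique k S) ∨ (∃ S ⊆ A, Gᶜ.IsNClique l S) := by
  intro n
  induction n with
  | zero =>
    intro k l hkl V _ G A _
    have hk : k = 0 := by omega
    subst hk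
    exact Or.inl ⟨∅, by simp, by simp [isNClique_empty]⟩
  | succ n ih =>
    intro k l hkl V _ G A hA
    classical
    match k, l with
    | 0, l => exact Or.inl ⟨∅, by simp, by simp [isNClique_empty]⟩
    | k + 1, 0 => exact Or.inr ⟨∅, by simp, by simp [isNClique_empty]⟩
    | k + 1, l + 1 =>
      rw [Rb] at hA
      obtain ⟨v, hv⟩ : A.Nonempty := Finset.card_pos.mp (by omega)
      set A' := (A.erase v).filter (fun u => G.Adj v u) with hA'def
      set B' := (A.erase v).filter (fun u => ¬ G.Adj v u) with hB'def
      have hsplit : A'.card + B'.card = (A.erase v).card :=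
        Finset.card_filter_add_card_filter_not (fun u => G.Adj v u)
      have hcarde : (A.erase v).card = A.card - 1 := Finset.card_erase_of_mem hv
      have hcase : Rb k (l + 1) ≤ A'.card ∨ Rb (k + 1) l ≤ B'.card := by omega
      rcases hcase with h | h
      · rcases ih k (l + 1) (by omega) G A' h with ⟨S, hSA, hS⟩ | ⟨S, hSA, hS⟩
        · refine Or.inl ⟨insert v S, ?_, ?_⟩
          · intro u hu
            rcases Finset.mem_insert.mp hu with rfl | hu
            · exact hv
            · exact Finset.mem_of_mem_erase (Finset.mem_of_mem_filter u (hSA hu))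
          · refine hS.insert fun b hb => ?_
            exact (Finset.mem_filter.mp (hSA hb)).2
        · exact Or.inr ⟨S, fun u hu =>
            Finset.mem_of_mem_erase (Finset.mem_of_mem_filter u (hSA hu)), hS⟩
      · rcases ih (k + 1) l (by omega) G B' h with ⟨S, hSA, hS⟩ | ⟨S, hSA, hS⟩
        · exact Or.inl ⟨S, fun u hu =>
            Finset.mem_of_mem_erase (Finset.mem_of_mem_filter u (hSA hu)), hS⟩
        · refine Or.inr ⟨insert v S, ?_, ?_⟩
          · intro u hu
            rcases Finset.mem_insert.mp hu with rfl | hu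
            · exact hv
            · exact Finset.mem_of_mem_erase (Finset.mem_of_mem_filter u (hSA hu))
          · refine hS.insert fun b hb => ?_
            have hb' := Finset.mem_filter.mp (hSA hb)
            have hbv : b ≠ v := Finset.ne_of_mem_erase hb'.1
            exact ⟨hbv.symm, hb'.2⟩

theorem ramseyNumber_prop (k l : ℕ) (V : Type) [Fintype V] (G : SimpleGraph V)
    (h : ramseyNumber k l ≤ Fintype.card V) :
    (∃ S : Finset V, G.IsNClique k S) ∨ (∃ S : Finset V, Gᶜ.IsNClique l S) := by
  have hne : {N | ∀ (W : Type) [Fintype W] (G' : SimpleGraph W),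
      N ≤ Fintype.card W →
        (∃ S : Finset W, G'.IsNClique k S) ∨ (∃ S : Finset W, G'ᶜ.IsNClique l S)}.Nonempty := by
    refine ⟨Rb k l, fun W _ G' hW => ?_⟩
    rcases ramsey_finset (k + l) k l le_rfl G' Finset.univ
        (by simpa using hW) with ⟨S, _, hS⟩ | ⟨S, _, hS⟩
    · exact Or.inl ⟨S, hS⟩
    · exact Or.inr ⟨S, hS⟩
  have := Nat.sInf_mem hne
  exact this V G h

theorem stmt11 (s : ℕ) (hs : 1 ≤ s) (V : Type) [Fintype V] (G : SimpleGraph V)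
    (hK4 : IsFree (completeGraph (Fin 4)) G)
    (hcard : ramseyNumber 4 (ramseyNumber 4 s) + 1 ≤ Fintype.card V)
    (K : ℕ) (hK : ramseyNumber 4 (ramseyNumber 4 s) < K)
    (x : Fin K → V) (hxinj : Function.Injective x)
    (y : Fin K → V)
    (hnbr : ∀ j : Fin K, {z : V | z ∈ Set.range x ∧ G.Adj (y j) z} = {x j}) :
    ∃ T : Finset (Fin K), T.card = s ∧
      (∀ i ∈ T, ∀ j ∈ T, i ≠ j → ¬ G.Adj (x i) (x j)) ∧
      (∀ i ∈ T, ∀ j ∈ T, i ≠ j → ¬ G.Adj (y i) (y j)) ∧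
      ∀ j ∈ T, {z : V | z ∈ x '' (T : Set (Fin K)) ∧ G.Adj (y j) z} = {x j} := by
  classical
  -- G is K4-free in the clique sense
  have hCF : G.CliqueFree 4 := by
    rw [SimpleGraph.cliqueFree_iff]
    exact ⟨fun f => hK4 ⟨⟨f.toEmbedding, fun {v w} ↦ ⟨fun h ↦ by simpa using h.ne, f.toHom.map_adj⟩⟩⟩⟩
  -- adjacency of (y j) to members of range x
  have hyadj : ∀ j : Fin K, G.Adj (y j) (x j) := by
    intro j
    have : x j ∈ {z : V | z ∈ Set.range x ∧ G.Adj (y j) z} := by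
      rw [hnbr j]; rfl
    exact this.2
  have hyonly : ∀ j i : Fin K, G.Adj (y j) (x i) → i = j := by
    intro j i hadj
    have : x i ∈ {z : V | z ∈ Set.range x ∧ G.Adj (y j) z} := ⟨⟨i, rfl⟩, hadj⟩
    rw [hnbr j] at this
    exact hxinj this
  -- y is injective
  have hyinj : Function.Injective y := by
    intro i j hij
    apply hyonly j i
    rw [← hij]
    exact hyadj i
  -- Step 1: find an independent set of size R(4,s) inside Fin K w.r.t. x-adjacency
  have hcomapCF : (G.comap x).CliqueFree 4 :=
    hCF.comap (SimpleGraph.Embedding.comap ⟨x, hxinj⟩ G).isContained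
  rcases ramseyNumber_prop 4 (ramseyNumber 4 s) (Fin K) (G.comap x)
      (by simpa using hK.le) with ⟨S, hS⟩ | ⟨S, hS⟩
  · exact absurd hS (hcomapCF S)
  -- S is independent for x, with card = ramseyNumber 4 s
  have hScard : S.card = ramseyNumber 4 s := hS.2
  have hSindep : ∀ i ∈ S, ∀ j ∈ S, i ≠ j → ¬ G.Adj (x i) (x j) := by
    intro i hi j hj hij
    have := hS.1 hi hj hij
    simp only [SimpleGraph.compl_adj, SimpleGraph.comap_adj] at this
    exact this.2
  -- Step 2: Ramsey on the subtype of S, w.r.t. y-adjacency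
  set G2 : SimpleGraph {a // a ∈ S} := G.comap (fun a => y a.1) with hG2
  have hG2CF : G2.CliqueFree 4 :=
    hCF.comap (SimpleGraph.Embedding.comap
      ⟨fun a : {a // a ∈ S} => y a.1, fun a b hab => Subtype.ext (hyinj hab)⟩ G).isContained
  rcases ramseyNumber_prop 4 s {a // a ∈ S} G2
      (by rw [Fintype.card_coe, hScard]) with ⟨T', hT'⟩ | ⟨T', hT'⟩
  · exact absurd hT' (hG2CF T')
  -- T = image of T' in Fin K
  refine ⟨T'.image (fun a => a.1), ?_, ?_, ?_, ?_⟩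
  · rw [Finset.card_image_of_injective _ Subtype.val_injective, hT'.2]
  · intro i hi j hj hij
    simp only [Finset.mem_image] at hi hj
    obtain ⟨a, ha, rfl⟩ := hi
    obtain ⟨b, hb, rfl⟩ := hj
    exact hSindep _ a.2 _ b.2 hij
  · intro i hi j hj hij
    simp only [Finset.mem_image] at hi hj
    obtain ⟨a, ha, rfl⟩ := hi
    obtain ⟨b, hb, rfl⟩ := hj
    have hab : a ≠ b := fun h => hij (by rw [h])
    have := hT'.1 ha hb hab
    simp only [hG2, SimpleGraph.compl_adj, SimpleGraph.comap_adj] at this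
    exact this.2
  · intro j hj
    ext z
    simp only [Set.mem_setOf_eq, Set.mem_singleton_iff]
    constructor
    · rintro ⟨⟨i, hi, rfl⟩, hadj⟩
      rw [hyonly j i hadj]
    · rintro rfl
      exact ⟨⟨j, by exact_mod_cast hj, rfl⟩, hyadj j⟩
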